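/- Let G be a discrete group and let σ, σ' be cohomologous multipliers on G with values in 𝒰(ℚ̄). If G has the σ-multiplier algebraic eigenvalue property, then G has the σ'-multiplier algebraic eigenvalue property. -/

import Mathlib

open scoped ComplexConjugate ENNReal

noncomputable section

/-- `l²(X)`, the Hilbert space of square-summable complex functions on `X`. -/
abbrev l2 (X : Type*) : Type _ := lp (fun _ : X => ℂ) 2

/-- A (normalized) multiplier on a discrete group `G`: a `U(1)`-valued 2-cocycle. -/
def IsMultiplier {G : Type*} [Group G] (σ : G → G → ℂ) : Prop :=
  (∀ g h, ‖σ g h‖ = 1) ∧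
  (∀ a b c, σ b c * σ a (b * c) = σ (a * b) c * σ a b) ∧
  (∀ g, σ 1 g = 1) ∧ (∀ g, σ g 1 = 1)

/-- `A` acts on `l²(G)^d` (realized as `l²(G × Fin d)`) as the matrix over the twisted
group algebra with coefficient matrices `a g` supported in the finite set `T`, i.e.
`(Af)(x) = ∑_h a(xh⁻¹) σ(xh⁻¹,h) f(h) = ∑_{g∈T} a(g) σ(g,g⁻¹x) f(g⁻¹x)`. -/
def ActsAsTwisted {G : Type*} [Group G] (σ : G → G → ℂ) (d : ℕ) (T : Finset G)
    (a : G → Matrix (Fin d) (Fin d) ℂ)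
    (A : l2 (G × Fin d) →L[ℂ] l2 (G × Fin d)) : Prop :=
  (∀ g, g ∉ T → a g = 0) ∧
  ∀ (f : l2 (G × Fin d)) (x : G) (i : Fin d),
    A f (x, i) = ∑ g ∈ T, ∑ j, a g i j * σ g (g⁻¹ * x) * f (g⁻¹ * x, j)

/-- `lam` is an eigenvalue of the bounded operator `A` on `l²(X)`. -/
def HasL2Eigenvalue {X : Type*} (A : l2 X →L[ℂ] l2 X) (lam : ℂ) : Prop :=
  ∃ f : l2 X, f ≠ 0 ∧ A f = lam • f

/-- The `σ`-multiplier algebraic eigenvalue property: every matrix over the twisted group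
algebra `ℚ̄(G,σ)` acting on `l²(G)^d` has only algebraic eigenvalues. -/
def HasMAEP (G : Type*) [Group G] (σ : G → G → ℂ) : Prop :=
  ∀ (d : ℕ) (T : Finset G) (a : G → Matrix (Fin d) (Fin d) ℂ),
    (∀ g i j, IsAlgebraic ℚ (a g i j)) →
    ∀ A : l2 (G × Fin d) →L[ℂ] l2 (G × Fin d), ActsAsTwisted σ d T a A →
    ∀ lam : ℂ, HasL2Eigenvalue A lam → IsAlgebraic ℚ lam

/-- The (untwisted) algebraic eigenvalue property. -/
def HasAEP (G : Type*) [Group G] : Prop := HasMAEP G fun _ _ => 1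

lemma memℓp_mul {X : Type*} (m : X → ℂ) (hm : ∀ x, ‖m x‖ = 1)
    (f : l2 X) : Memℓp (fun x => m x * f x) 2 := by
  apply memℓp_gen
  have he : (fun x => ‖m x * f x‖ ^ (2:ℝ≥0∞).toReal) = fun x => ‖f x‖ ^ (2:ℝ≥0∞).toReal := by
    funext x
    rw [norm_mul, show ‖m x‖ = 1 from hm x, one_mul]
  rw [he]
  exact (lp.memℓp f).summable (by norm_num)

def mulOp {X : Type*} (m : X → ℂ) (hm : ∀ x, ‖m x‖ = 1) : l2 X →L[ℂ] l2 X := by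
  refine LinearMap.mkContinuous
    { toFun := fun f => ⟨fun x => m x * f x, memℓp_mul m hm f⟩
      map_add' := ?_, map_smul' := ?_ } 1 ?_
  · intro f g; apply Subtype.ext; funext x
    simp only [lp.coeFn_add, Pi.add_apply]
    show m x * (f x + g x) = m x * f x + m x * g x
    ring
  · intro c f; apply Subtype.ext; funext x
    simp only [lp.coeFn_smul, Pi.smul_apply, smul_eq_mul, RingHom.id_apply]
    show m x * (c * f x) = c * (m x * f x)
    ring
  · intro f
    rw [one_mul]
    apply le_of_eq
    have h2 : (0:ℝ) < (2:ℝ≥0∞).toReal := by norm_num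
    rw [lp.norm_eq_tsum_rpow h2, lp.norm_eq_tsum_rpow h2]
    congr 1
    apply tsum_congr
    intro x
    have hx : ‖m x * f x‖ = ‖f x‖ := by
      rw [norm_mul, show ‖m x‖ = 1 from hm x, one_mul]
    show ‖m x * f x‖ ^ _ = _
    rw [hx]

@[simp] lemma mulOp_apply {X : Type*} (m : X → ℂ) (hm : ∀ x, ‖m x‖ = 1)
    (f : l2 X) (x : X) : mulOp m hm f x = m x * f x := rfl

/-- The `σ`-multiplier algebraic eigenvalue property depends only on the cohomology
class of the multiplier: if `σ` and `σ'` are cohomologous multipliers with values in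
`𝒰(ℚ̄)` and `G` has the `σ`-multiplier algebraic eigenvalue property, then `G` has the
`σ'`-multiplier algebraic eigenvalue property. -/
theorem maep_of_cohomologous {G : Type*} [Group G]
    (σ σ' : G → G → ℂ) (hσ : IsMultiplier σ) (hσ' : IsMultiplier σ')
    (hσalg : ∀ g h, IsAlgebraic ℚ (σ g h)) (hσ'alg : ∀ g h, IsAlgebraic ℚ (σ' g h))
    (s : G → ℂ) (hsalg : ∀ g, IsAlgebraic ℚ (s g)) (hs1 : ∀ g, ‖s g‖ = 1)
    (hcoh : ∀ g h, σ g h = s g * s h * conj (s (g * h)) * σ' g h)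
    (hG : HasMAEP G σ) : HasMAEP G σ' := by
  intro d T a' ha'alg A' hA' lam hlam
  have hmabs : ∀ p : G × Fin d, ‖conj (s p.1)‖ = 1 := fun p => by
    rw [Complex.norm_conj]; exact hs1 p.1
  have hm'abs : ∀ p : G × Fin d, ‖s p.1‖ = 1 := fun p => hs1 p.1
  set M := mulOp (fun p : G × Fin d => conj (s p.1)) hmabs with hM
  set Minv := mulOp (fun p : G × Fin d => s p.1) hm'abs with hMinv
  have hunit : ∀ g : G, conj (s g) * s g = 1 := by
    intro g
    have := Complex.mul_conj (s g)
    rw [mul_comm] at this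
    rw [this, Complex.normSq_eq_norm_sq, hs1 g]
    norm_num
  have hMinvM : ∀ f : l2 (G × Fin d), Minv (M f) = f := by
    intro f
    apply Subtype.ext; funext p
    show s p.1 * (conj (s p.1) * f p) = f p
    rw [← mul_assoc, mul_comm (s p.1), hunit p.1, one_mul]
  set a : G → Matrix (Fin d) (Fin d) ℂ := fun g => conj (s g) • a' g with ha
  have haalg : ∀ g i j, IsAlgebraic ℚ (a g i j) := by
    intro g i j
    have h1 : IsAlgebraic ℚ (conj (s g)) := by
      rw [← Complex.inv_eq_conj (hs1 g)]
      exact (hsalg g).inv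
    rw [isAlgebraic_iff_isIntegral] at h1 ⊢
    have h2 := ha'alg g i j
    rw [isAlgebraic_iff_isIntegral] at h2
    exact h1.mul h2
  refine hG d T a haalg (M ∘L A' ∘L Minv) ⟨?_, ?_⟩ lam ?_
  · intro g hg
    rw [ha]
    simp only [hA'.1 g hg, smul_zero]
  · intro f x i
    show (M (A' (Minv f))) (x, i) = _
    rw [show (M (A' (Minv f))) (x, i) = conj (s x) * (A' (Minv f)) (x, i) from rfl]
    rw [hA'.2 (Minv f) x i, Finset.mul_sum]
    refine Finset.sum_congr rfl fun g _ => ?_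
    rw [Finset.mul_sum]
    refine Finset.sum_congr rfl fun j _ => ?_
    rw [show (Minv f) (g⁻¹ * x, j) = s (g⁻¹ * x) * f (g⁻¹ * x, j) from rfl]
    have key : conj (s g) * σ g (g⁻¹ * x) = conj (s x) * σ' g (g⁻¹ * x) * s (g⁻¹ * x) := by
      have h := hcoh g (g⁻¹ * x)
      rw [mul_inv_cancel_left] at h
      rw [h, ← mul_assoc, ← mul_assoc, ← mul_assoc, hunit g, one_mul]
      ring
    rw [show a g i j = conj (s g) * a' g i j from rfl]
    symm
    calc conj (s g) * a' g i j * σ g (g⁻¹ * x) * f (g⁻¹ * x, j)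
        = a' g i j * (conj (s g) * σ g (g⁻¹ * x)) * f (g⁻¹ * x, j) := by ring
      _ = a' g i j * (conj (s x) * σ' g (g⁻¹ * x) * s (g⁻¹ * x)) * f (g⁻¹ * x, j) := by
          rw [key]
      _ = conj (s x) * (a' g i j * σ' g (g⁻¹ * x) * (s (g⁻¹ * x) * f (g⁻¹ * x, j))) := by ring
  · obtain ⟨f, hf0, hfe⟩ := hlam
    refine ⟨M f, ?_, ?_⟩
    · intro h
      apply hf0
      have := hMinvM f
      rw [h, map_zero] at this
      exact this.symm
    · show M (A' (Minv (M f))) = lam • M f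
      rw [hMinvM f, hfe, map_smul]
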